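/- Let (c_j) be a summable sequence of nonnegative real numbers, and let n ≥ 1, d = n − l with 1 ≤ l ≤ n. Then Σ_{j=d+1}^∞ c_j + Σ_{j=1}^∞ Σ_{i=2jn−d}^{2jn+d} c_i ≤ 2 Σ_{i=n−l+1}^∞ c_i. -/

import Mathlib

/-- A finite sum of nonneg `c` over indices all `≥ m` is at most the tail series. -/
lemma finset_sum_le_tail (c : ℕ → ℝ) (hc0 : ∀ j, 0 ≤ c j) (hc : Summable c)
    (m : ℕ) (F : Finset ℕ) (hF : ∀ i ∈ F, m ≤ i) :
    ∑ i ∈ F, c i ≤ ∑' j : ℕ, c (m + j) := by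
  have hsum : Summable fun j => c (m + j) := hc.comp_injective (add_right_injective m)
  have hinj : Set.InjOn (· - m) ↑F := by
    intro a ha b hb hab
    have := hF a ha; have := hF b hb
    simp only at hab; omega
  have : ∑ i ∈ F.image (· - m), c (m + i) = ∑ i ∈ F, c i := by
    rw [Finset.sum_image hinj]
    apply Finset.sum_congr rfl
    intro x hx
    congr 1
    have := hF x hx; omega
  rw [← this]
  exact Summable.sum_le_tsum _ (fun i _ => hc0 _) hsum

theorem aliasing_tail_bound_minus (c : ℕ → ℝ) (hc0 : ∀ j, 0 ≤ c j) (hc : Summable c)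
    (n l : ℕ) (hn : 1 ≤ n) (hl : 1 ≤ l) (hln : l ≤ n) :
    (∑' j : ℕ, c (n - l + 1 + j)) +
        ∑' j : ℕ, ∑ i ∈ Finset.Icc (2 * (j + 1) * n - (n - l)) (2 * (j + 1) * n + (n - l)), c i ≤
      2 * ∑' j : ℕ, c (n - l + 1 + j) := by
  set m := n - l + 1 with hm
  set S : ℕ → ℝ := fun j =>
    ∑ i ∈ Finset.Icc (2 * (j + 1) * n - (n - l)) (2 * (j + 1) * n + (n - l)), c i with hS
  have key : (∑' j : ℕ, S j) ≤ ∑' j : ℕ, c (m + j) := by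
    apply Real.tsum_le_of_sum_range_le
    · intro j
      exact Finset.sum_nonneg fun i _ => hc0 i
    · intro N
      set t : ℕ → Finset ℕ := fun j =>
        Finset.Icc (2 * (j + 1) * n - (n - l)) (2 * (j + 1) * n + (n - l)) with ht
      have hsep : ∀ j k : ℕ, j < k → Disjoint (t j) (t k) := by
        intro j k hlt
        rw [Finset.disjoint_left]
        intro i hij hik
        simp only [ht, Finset.mem_Icc] at hij hik
        have hAB : 2 * (j + 1) * n + 2 * n ≤ 2 * (k + 1) * n := by nlinarith
        set A := 2 * (j + 1) * n
        set B := 2 * (k + 1) * n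
        omega
      have hdisj : (↑(Finset.range N) : Set ℕ).Pairwise (Function.onFun Disjoint t) := by
        intro j _ k _ hjk
        rcases Nat.lt_or_ge j k with h | h
        · exact hsep j k h
        · exact (hsep k j (by omega)).symm
      have heq : ∑ j ∈ Finset.range N, S j = ∑ i ∈ (Finset.range N).biUnion t, c i :=
        (Finset.sum_biUnion hdisj).symm
      rw [heq]
      apply finset_sum_le_tail c hc0 hc
      intro i hi
      simp only [Finset.mem_biUnion, ht, Finset.mem_Icc] at hi
      obtain ⟨j, _, hij⟩ := hi
      have hA : 2 * n ≤ 2 * (j + 1) * n := by nlinarith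
      set A := 2 * (j + 1) * n
      omega
  linarith
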